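/- Let p ≥ 3 and let Θ̂ ∈ ℝ^{p×p} be symmetric with zero diagonal, and define ω̂ ∈ ℝ^p componentwise by ω̂_j = (1/(p−1)) Σ_{k≠j} Θ̂_{jk} − (1/(2(p−1)(p−2))) Σ_{k≠j} Σ_{l≠j} Θ̂_{lk}. Then, with r_j = Σ_{k≠j} Θ̂_{jk} and S = Σ_{j=1}^p r_j, the vector ω̂ satisfies the normal equations (p−1)ω̂_j + Σ_{k≠j} ω̂_k = r_j for every j ∈ {1,…,p}; that is, ω̂ is the stationary point of the function ω ↦ Σ_{j≠k}(Θ̂_{jk} − ω_j − ω_k)². -/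

import Mathlib

/-- The closed-form `ω̂` of Proposition 1 satisfies the normal equations
`(p−1)ω̂_j + Σ_{k≠j} ω̂_k = r_j` with `r_j = Σ_{k≠j} Θ̂_{jk}`; that is, `ω̂` is the
stationary point of `ω ↦ Σ_{j≠k}(Θ̂_{jk} − ω_j − ω_k)²`. -/
theorem stmt_12 (p : ℕ) (hp : 3 ≤ p)
    (Θ : Matrix (Fin p) (Fin p) ℝ) (hsym : Θ.IsSymm) (hdiag : ∀ j, Θ j j = 0)
    (ωhat : Fin p → ℝ)
    (hωhat : ∀ j, ωhat j =
      (1 / ((p : ℝ) - 1)) * ∑ k ∈ Finset.univ.erase j, Θ j k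
        - (1 / (2 * ((p : ℝ) - 1) * ((p : ℝ) - 2))) *
            ∑ k ∈ Finset.univ.erase j, ∑ l ∈ Finset.univ.erase j, Θ l k)
    (r : Fin p → ℝ) (hr : ∀ j, r j = ∑ k ∈ Finset.univ.erase j, Θ j k)
    (S : ℝ) (hS : S = ∑ j, r j)
    (f : (Fin p → ℝ) → ℝ)
    (hf : ∀ ω : Fin p → ℝ,
      f ω = ∑ j, ∑ k ∈ Finset.univ.erase j, (Θ j k - ω j - ω k) ^ 2) :
    (∀ j, ((p : ℝ) - 1) * ωhat j + ∑ k ∈ Finset.univ.erase j, ωhat k = r j) ∧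
    fderiv ℝ f ωhat = 0 := by
  have hp3 : (3:ℝ) ≤ (p:ℝ) := by exact_mod_cast hp
  have hp1 : ((p:ℝ) - 1) ≠ 0 := by linarith
  have hp2 : ((p:ℝ) - 2) ≠ 0 := by linarith
  have hrj : ∀ j, ∑ k, Θ j k = r j := by
    intro j
    rw [hr, ← Finset.sum_erase_add Finset.univ _ (Finset.mem_univ j), hdiag j, add_zero]
  have hcj : ∀ j, ∑ l, Θ l j = r j := by
    intro j
    rw [← hrj j]
    exact Finset.sum_congr rfl fun l _ => hsym.apply j l
  have hStot : ∑ k, ∑ l, Θ l k = S := by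
    rw [hS]
    exact Finset.sum_congr rfl fun k _ => hcj k
  have hT : ∀ j, (∑ k ∈ Finset.univ.erase j, ∑ l ∈ Finset.univ.erase j, Θ l k)
      = S - 2 * r j := by
    intro j
    have h1 : ∀ k, ∑ l ∈ Finset.univ.erase j, Θ l k = (∑ l, Θ l k) - Θ j k := by
      intro k
      exact Finset.sum_erase_eq_sub (Finset.mem_univ j)
    rw [Finset.sum_congr rfl fun k _ => h1 k, Finset.sum_sub_distrib,
      Finset.sum_erase_eq_sub (f := fun k => ∑ l, Θ l k) (Finset.mem_univ j),
      hStot, hcj j, ← hr j]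
    ring
  have hωe : ∀ j, ωhat j = (1/((p:ℝ)-1)) * r j
      - (1/(2*((p:ℝ)-1)*((p:ℝ)-2))) * (S - 2 * r j) := by
    intro j
    rw [hωhat, hT, hr]
  have hcard : ((Finset.univ : Finset (Fin p)).card : ℝ) = (p:ℝ) := by simp
  have hsum : ∑ k, ωhat k = S / (2*((p:ℝ)-1)) := by
    rw [Finset.sum_congr rfl fun k _ => hωe k, Finset.sum_sub_distrib,
      ← Finset.mul_sum, ← Finset.mul_sum, Finset.sum_sub_distrib,
      Finset.sum_const, nsmul_eq_mul, ← Finset.mul_sum, ← hS, hcard]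
    field_simp
    ring
  have part1 : ∀ j, ((p:ℝ) - 1) * ωhat j + ∑ k ∈ Finset.univ.erase j, ωhat k = r j := by
    intro j
    rw [Finset.sum_erase_eq_sub (Finset.mem_univ j), hsum, hωe j]
    field_simp
    ring
  refine ⟨part1, ?_⟩
  have hcarde : ∀ j : Fin p, (((Finset.univ : Finset (Fin p)).erase j).card : ℝ) = (p:ℝ) - 1 := by
    intro j
    rw [Finset.card_erase_of_mem (Finset.mem_univ j), Finset.card_univ, Fintype.card_fin,
      Nat.cast_sub (by omega)]
    simp
  have hc : ∀ j, ∑ k ∈ Finset.univ.erase j, (Θ j k - ωhat j - ωhat k) = 0 := by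
    intro j
    rw [Finset.sum_sub_distrib, Finset.sum_sub_distrib, ← hr j, Finset.sum_const,
      nsmul_eq_mul, hcarde j]
    have := part1 j
    linarith
  set L : Fin p → (Fin p → ℝ) →L[ℝ] ℝ :=
    fun j => ContinuousLinearMap.proj (R := ℝ) (φ := fun _ : Fin p => ℝ) j with hL
  have hD : HasFDerivAt f
      (∑ j, ∑ k ∈ Finset.univ.erase j,
        ((2:ℝ) * (Θ j k - ωhat j - ωhat k)) • (-(L j) - L k)) ωhat := by
    have hfe : f = fun ω => ∑ j, ∑ k ∈ Finset.univ.erase j, (Θ j k - ω j - ω k) ^ 2 :=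
      funext hf
    rw [hfe]
    refine HasFDerivAt.fun_sum fun j _ => HasFDerivAt.fun_sum fun k _ => ?_
    have hu : HasFDerivAt (fun ω : Fin p → ℝ => Θ j k - ω j - ω k)
        (-(L j) - L k) ωhat := by
      have h1 : HasFDerivAt (fun ω : Fin p → ℝ => ω j) (L j) ωhat :=
        (L j).hasFDerivAt
      have h2 : HasFDerivAt (fun ω : Fin p → ℝ => ω k) (L k) ωhat :=
        (L k).hasFDerivAt
      simpa using ((hasFDerivAt_const (Θ j k) ωhat).fun_sub h1).fun_sub h2
    simpa [pow_two, two_mul, add_smul] using hu.fun_mul hu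
  rw [hD.fderiv]
  ext v
  simp only [ContinuousLinearMap.coe_sum', Finset.sum_apply,
    ContinuousLinearMap.coe_smul', Pi.smul_apply, ContinuousLinearMap.sub_apply,
    ContinuousLinearMap.neg_apply, ContinuousLinearMap.zero_apply, smul_eq_mul, hL,
    ContinuousLinearMap.proj_apply]
  have swap : ∀ g : Fin p → Fin p → ℝ,
      ∑ j, ∑ k ∈ Finset.univ.erase j, g j k = ∑ k, ∑ j ∈ Finset.univ.erase k, g j k := by
    intro g
    simp_rw [← Finset.filter_ne', Finset.sum_filter]
    rw [Finset.sum_comm]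
    refine Finset.sum_congr rfl fun k _ => Finset.sum_congr rfl fun j _ => ?_
    simp [ne_comm]
  have expand : ∀ (j k : Fin p),
      (2:ℝ) * (Θ j k - ωhat j - ωhat k) * (-v j - v k)
        = 2 * (Θ j k - ωhat j - ωhat k) * (-v j)
          + 2 * (Θ j k - ωhat j - ωhat k) * (-v k) := by
    intro j k; ring
  rw [Finset.sum_congr rfl fun j _ => Finset.sum_congr rfl fun k _ => expand j k]
  simp_rw [Finset.sum_add_distrib]
  have e1 : ∀ j, ∑ k ∈ Finset.univ.erase j,
      2 * (Θ j k - ωhat j - ωhat k) * (-v j) = 0 := by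
    intro j
    rw [← Finset.sum_mul, ← Finset.mul_sum, hc j, mul_zero, zero_mul]
  have e2 : ∑ j, ∑ k ∈ Finset.univ.erase j,
      2 * (Θ j k - ωhat j - ωhat k) * (-v k) = 0 := by
    rw [swap]
    refine Finset.sum_eq_zero fun k _ => ?_
    rw [← Finset.sum_mul, ← Finset.mul_sum]
    have : ∑ j ∈ Finset.univ.erase k, (Θ j k - ωhat j - ωhat k)
        = ∑ j ∈ Finset.univ.erase k, (Θ k j - ωhat k - ωhat j) := by
      refine Finset.sum_congr rfl fun j _ => ?_
      rw [hsym.apply k j]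
      ring
    rw [this, hc k, mul_zero, zero_mul]
  rw [Finset.sum_congr rfl fun j _ => by rw [e1 j], e2]
  simp
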